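/- The diagonal of the Bessel kernel of order a satisfies: lim_{y→x} [J_a(√x)√y J_a'(√y) − J_a'(√x)√x J_a(√y)]/(2(x−y)) = [(J_a(√x))² − J_{a+1}(√x) J_{a−1}(√x)]/4 for x > 0. -/

import Mathlib

open MeasureTheory Real Filter Finset intervalIntegral

/-- Jacobi polynomial `P_n^{(a,b)}` via the explicit hypergeometric-type sum,
normalized so that `P_n^{(a,b)}(1) = Γ(n+a+1)/(n! Γ(a+1))`. -/
noncomputable def jacobiP (a b : ℝ) (n : ℕ) (x : ℝ) : ℝ :=
  (Real.Gamma (a + n + 1) / (n.factorial * Real.Gamma (a + b + (n : ℝ) + 1))) *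
    ∑ m ∈ Finset.range (n + 1),
      (n.choose m : ℝ) * Real.Gamma (a + b + (n : ℝ) + m + 1) / Real.Gamma (a + (m : ℝ) + 1) *
        ((x - 1) / 2) ^ m

/-- Squared norm `h_j^{(a,b)}` of the Jacobi polynomials. -/
noncomputable def jacobiH (a b : ℝ) (j : ℕ) : ℝ :=
  2 ^ (a + b + 1) * Real.Gamma ((j : ℝ) + a + 1) * Real.Gamma ((j : ℝ) + b + 1) /
    (j.factorial * (2 * (j : ℝ) + a + b + 1) * Real.Gamma ((j : ℝ) + a + b + 1))

/-- Orthonormalized Jacobi functions `φ_j`. -/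
noncomputable def jacobiPhi (a b : ℝ) (j : ℕ) (x : ℝ) : ℝ :=
  jacobiP a b j x * (1 - x) ^ (a / 2) * (1 + x) ^ (b / 2) / Real.sqrt (jacobiH a b j)

/-- Bessel function of the first kind of order `ν` (series definition). -/
noncomputable def besselJ (ν : ℝ) (t : ℝ) : ℝ :=
  ∑' m : ℕ, (-1 : ℝ) ^ m / (m.factorial * Real.Gamma ((m : ℝ) + ν + 1)) *
    (t / 2) ^ (2 * (m : ℝ) + ν)

/-- Christoffel–Darboux kernel of the Jacobi unitary ensemble. -/
noncomputable def K2 (a b : ℝ) (N : ℕ) (x y : ℝ) : ℝ :=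
  ∑ j ∈ Finset.range N, jacobiPhi a b j x * jacobiPhi a b j y

/-- The operator `ε`: `(εg)(x) = (1/2)(∫_{-1}^x g - ∫_x^1 g)`. -/
noncomputable def epsOp (g : ℝ → ℝ) (x : ℝ) : ℝ :=
  (1 / 2) * ((∫ y in (-1 : ℝ)..x, g y) - ∫ y in x..(1 : ℝ), g y)

/-- The Bessel kernel of order `a`. -/
noncomputable def besselKernel (a : ℝ) (x y : ℝ) : ℝ :=
  (besselJ a (Real.sqrt x) * Real.sqrt y * deriv (besselJ a) (Real.sqrt y) -
      deriv (besselJ a) (Real.sqrt x) * Real.sqrt x * besselJ a (Real.sqrt y)) /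
    (2 * (x - y))

noncomputable def bc (ν : ℝ) (m : ℕ) : ℝ :=
  (-1 : ℝ) ^ m / (m.factorial * Real.Gamma ((m : ℝ) + ν + 1))

noncomputable def Fb (ν z : ℝ) : ℝ := ∑' m : ℕ, bc ν m * z ^ m

lemma inv_Gamma_succ (w : ℝ) : 1 / Real.Gamma w = w / Real.Gamma (w + 1) := by
  rcases eq_or_ne w 0 with h | h
  · subst h; simp [Real.Gamma_zero]
  · rw [Real.Gamma_add_one h]
    rcases eq_or_ne (Real.Gamma w) 0 with hG | hG
    · simp [hG]
    · field_simp

lemma one_le_Gamma' {w : ℝ} (h : 2 ≤ w) : 1 ≤ Real.Gamma w := by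
  rcases eq_or_lt_of_le h with h' | h'
  · rw [← h', Real.Gamma_two]
  · calc (1 : ℝ) = Real.Gamma 2 := Real.Gamma_two.symm
      _ ≤ Real.Gamma w :=
        (Real.Gamma_strictMonoOn_Ici (by norm_num) (by simpa using h) h').le

lemma abs_bc_le {ν : ℝ} {m : ℕ} (h : 2 ≤ (m : ℝ) + ν + 1) :
    |bc ν m| ≤ 1 / m.factorial := by
  unfold bc
  have h1 : 1 ≤ Real.Gamma ((m : ℝ) + ν + 1) := one_le_Gamma' h
  have hF : (0 : ℝ) < m.factorial := by exact_mod_cast m.factorial_pos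
  rw [abs_div, abs_pow, abs_neg, abs_one, one_pow, abs_mul, Nat.abs_cast,
    abs_of_nonneg (by linarith : (0:ℝ) ≤ Real.Gamma ((m : ℝ) + ν + 1))]
  apply one_div_le_one_div_of_le hF
  exact le_mul_of_one_le_right hF.le h1

lemma summable_master (ν R : ℝ) (hR : 0 ≤ R) :
    Summable (fun m : ℕ => ((m : ℝ) + 1) * |bc ν m| * R ^ m) := by
  obtain ⟨M, hM⟩ := exists_nat_ge (1 - ν)
  rw [← summable_nat_add_iff M]
  have hsum : Summable (fun m : ℕ => (2 * R) ^ (m + M) / (m + M).factorial) :=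
    (summable_nat_add_iff M).2 (Real.summable_pow_div_factorial (2 * R))
  refine Summable.of_nonneg_of_le (fun m => by positivity) (fun m => ?_) hsum
  have hm0 : (0 : ℝ) ≤ (m : ℝ) := Nat.cast_nonneg m
  have h2 : 2 ≤ ((m + M : ℕ) : ℝ) + ν + 1 := by push_cast; linarith
  have hb := abs_bc_le (ν := ν) h2
  have hk : ((m + M : ℕ) : ℝ) + 1 ≤ 2 ^ (m + M) := by
    exact_mod_cast @Nat.lt_two_pow_self (m + M)
  calc (((m + M : ℕ) : ℝ) + 1) * |bc ν (m + M)| * R ^ (m + M)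
      ≤ 2 ^ (m + M) * (1 / (m + M).factorial) * R ^ (m + M) := by
        gcongr
    _ = (2 * R) ^ (m + M) / (m + M).factorial := by
        rw [mul_pow]; ring

lemma summable_bc (ν z : ℝ) : Summable (fun m : ℕ => bc ν m * z ^ m) := by
  apply Summable.of_norm
  refine Summable.of_nonneg_of_le (fun m => norm_nonneg _) (fun m => ?_)
    (summable_master ν |z| (abs_nonneg z))
  rw [norm_mul, norm_pow, Real.norm_eq_abs, Real.norm_eq_abs]
  have h1 : (0:ℝ) ≤ |bc ν m| * |z| ^ m := by positivity
  nlinarith [abs_nonneg (bc ν m), pow_nonneg (abs_nonneg z) m, (Nat.cast_nonneg m : (0:ℝ) ≤ m)]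

lemma deriv_term_bound (ν : ℝ) (m : ℕ) {y R : ℝ} (hy : |y| ≤ R) (hR : 1 ≤ R) :
    ‖bc ν m * ((m : ℝ) * y ^ (m - 1))‖ ≤ ((m : ℝ) + 1) * |bc ν m| * R ^ m := by
  rw [norm_mul, norm_mul, norm_pow, Real.norm_eq_abs, Real.norm_eq_abs, Real.norm_eq_abs,
    Nat.abs_cast]
  have h0 : (0 : ℝ) ≤ |y| := abs_nonneg y
  have h1 : |y| ^ (m - 1) ≤ R ^ (m - 1) := pow_le_pow_left₀ h0 hy _
  have h2 : R ^ (m - 1) ≤ R ^ m := pow_le_pow_right₀ hR (Nat.sub_le m 1)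
  have h3 : (m : ℝ) ≤ (m : ℝ) + 1 := by linarith
  calc |bc ν m| * ((m : ℝ) * |y| ^ (m - 1))
      ≤ |bc ν m| * (((m : ℝ) + 1) * R ^ m) := by
        refine mul_le_mul_of_nonneg_left ?_ (abs_nonneg _)
        exact mul_le_mul h3 (h1.trans h2) (pow_nonneg h0 _) (by positivity)
    _ = ((m : ℝ) + 1) * |bc ν m| * R ^ m := by ring

lemma bc_eval (μ : ℝ) (k : ℕ) :
    bc μ k = (-1 : ℝ) ^ k / k.factorial * (1 / Real.Gamma ((k : ℝ) + μ + 1)) := by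
  unfold bc
  rw [div_mul_eq_div_mul_one_div]

lemma bc_succ (ν : ℝ) (m : ℕ) : bc ν (m + 1) * ((m : ℝ) + 1) = -bc (ν + 1) m := by
  rw [bc_eval, bc_eval]
  rw [show ((m + 1 : ℕ) : ℝ) + ν + 1 = (m : ℝ) + (ν + 1) + 1 by push_cast; ring]
  set G := Real.Gamma ((m : ℝ) + (ν + 1) + 1) with hG
  rw [Nat.factorial_succ]
  push_cast
  rcases eq_or_ne G 0 with h | h
  · simp [h]
  · have hm : ((m : ℝ) + 1) ≠ 0 := by positivity
    have hF : (m.factorial : ℝ) ≠ 0 := by exact_mod_cast m.factorial_ne_zero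
    field_simp
    ring

lemma bc_zero_rec (ν : ℝ) : bc (ν - 1) 0 = ν * bc ν 0 := by
  rw [bc_eval, bc_eval]
  rw [show ((0 : ℕ) : ℝ) + (ν - 1) + 1 = ν by push_cast; ring,
    show ((0 : ℕ) : ℝ) + ν + 1 = ν + 1 by push_cast; ring]
  rw [inv_Gamma_succ ν]
  norm_num [div_eq_mul_inv]

lemma bc_rec (ν : ℝ) (m : ℕ) :
    bc (ν - 1) (m + 1) - ν * bc ν (m + 1) = -bc (ν + 1) m := by
  rw [bc_eval, bc_eval, bc_eval]
  rw [show ((m + 1 : ℕ) : ℝ) + (ν - 1) + 1 = (m : ℝ) + ν + 1 by push_cast; ring,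
    show ((m + 1 : ℕ) : ℝ) + ν + 1 = ((m : ℝ) + ν + 1) + 1 by push_cast; ring,
    show ((m : ℕ) : ℝ) + (ν + 1) + 1 = ((m : ℝ) + ν + 1) + 1 by push_cast; ring]
  rw [inv_Gamma_succ ((m : ℝ) + ν + 1)]
  set G := Real.Gamma (((m : ℝ) + ν + 1) + 1) with hG
  rw [Nat.factorial_succ]
  push_cast
  rcases eq_or_ne G 0 with h | h
  · simp [h]
  · have hm : ((m : ℝ) + 1) ≠ 0 := by positivity
    have hF : (m.factorial : ℝ) ≠ 0 := by exact_mod_cast m.factorial_ne_zero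
    field_simp
    ring

lemma Fb_hasDerivAt (ν z : ℝ) : HasDerivAt (Fb ν) (-Fb (ν + 1) z) z := by
  set R := |z| + 1 with hRdef
  have hR1 : (1 : ℝ) ≤ R := by simp only [hRdef]; linarith [abs_nonneg z]
  have hR0 : (0 : ℝ) ≤ R := by linarith
  have hz : z ∈ Set.Ioo (-R) R :=
    ⟨by simp only [hRdef]; linarith [neg_abs_le z], by simp only [hRdef]; linarith [le_abs_self z]⟩
  have key := hasDerivAt_tsum_of_isPreconnected
    (u := fun m : ℕ => ((m : ℝ) + 1) * |bc ν m| * R ^ m)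
    (g := fun (m : ℕ) (y : ℝ) => bc ν m * y ^ m)
    (g' := fun (m : ℕ) (y : ℝ) => bc ν m * ((m : ℝ) * y ^ (m - 1)))
    (summable_master ν R hR0) isOpen_Ioo (convex_Ioo (-R) R).isPreconnected
    (fun m y _ => (hasDerivAt_pow m y).const_mul (bc ν m))
    (fun m y hy => deriv_term_bound ν m (abs_le.2 ⟨hy.1.le, hy.2.le⟩) hR1)
    hz (summable_bc ν z) hz
  have hs' : Summable (fun m : ℕ => bc ν m * ((m : ℝ) * z ^ (m - 1))) := by
    apply Summable.of_norm
    exact Summable.of_nonneg_of_le (fun m => norm_nonneg _)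
      (fun m => deriv_term_bound ν m (abs_le.2 ⟨hz.1.le, hz.2.le⟩) hR1)
      (summable_master ν R hR0)
  have hval : ∑' m : ℕ, bc ν m * ((m : ℝ) * z ^ (m - 1)) = -Fb (ν + 1) z := by
    rw [hs'.tsum_eq_zero_add]
    simp only [Nat.cast_zero, zero_mul, mul_zero, zero_add]
    have hterm : ∀ m : ℕ, bc ν (m + 1) * (((m + 1 : ℕ) : ℝ) * z ^ ((m + 1) - 1)) =
        -(bc (ν + 1) m * z ^ m) := by
      intro m
      rw [Nat.add_sub_cancel]
      push_cast
      calc bc ν (m + 1) * (((m : ℝ) + 1) * z ^ m)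
          = (bc ν (m + 1) * ((m : ℝ) + 1)) * z ^ m := by ring
        _ = -(bc (ν + 1) m * z ^ m) := by rw [bc_succ]; ring
    simp_rw [hterm]
    rw [tsum_neg]
    rfl
  rw [← hval]
  exact key

lemma Fb_rec (ν z : ℝ) : Fb (ν - 1) z = ν * Fb ν z - z * Fb (ν + 1) z := by
  have h1 := summable_bc (ν - 1) z
  have h2 := (summable_bc ν z).mul_left ν
  have key : Fb (ν - 1) z - ν * Fb ν z = -(z * Fb (ν + 1) z) := by
    unfold Fb
    rw [← tsum_mul_left (a := ν), ← h1.tsum_sub h2]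
    have hsub : Summable (fun m : ℕ => bc (ν - 1) m * z ^ m - ν * (bc ν m * z ^ m)) :=
      h1.sub h2
    rw [hsub.tsum_eq_zero_add]
    have h0 : bc (ν - 1) 0 * z ^ 0 - ν * (bc ν 0 * z ^ 0) = 0 := by
      rw [bc_zero_rec]; ring
    rw [h0, zero_add]
    have hterm : ∀ m : ℕ, bc (ν - 1) (m + 1) * z ^ (m + 1) - ν * (bc ν (m + 1) * z ^ (m + 1)) =
        -(z * (bc (ν + 1) m * z ^ m)) := by
      intro m
      have h := bc_rec ν m
      calc bc (ν - 1) (m + 1) * z ^ (m + 1) - ν * (bc ν (m + 1) * z ^ (m + 1))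
          = (bc (ν - 1) (m + 1) - ν * bc ν (m + 1)) * (z ^ m * z) := by rw [pow_succ]; ring
        _ = -(z * (bc (ν + 1) m * z ^ m)) := by rw [h]; ring
    simp_rw [hterm]
    rw [tsum_neg, tsum_mul_left]
  linarith [key]

lemma besselJ_eq (ν t : ℝ) (ht : 0 < t) :
    besselJ ν t = (t / 2) ^ ν * Fb ν ((t / 2) ^ 2) := by
  have ht2 : (0 : ℝ) < t / 2 := by linarith
  unfold besselJ Fb
  rw [← tsum_mul_left]
  apply tsum_congr
  intro m
  have h : (t / 2) ^ (2 * (m : ℝ) + ν) = ((t / 2) ^ 2) ^ m * (t / 2) ^ ν := by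
    rw [Real.rpow_add ht2]
    congr 1
    rw [show (2 * (m : ℝ)) = ((2 * m : ℕ) : ℝ) by push_cast; ring, Real.rpow_natCast, pow_mul]
  rw [h]
  simp only [bc]
  ring

lemma besselJ_hasDerivAt (ν t : ℝ) (ht : 0 < t) :
    HasDerivAt (besselJ ν) (ν / t * besselJ ν t - besselJ (ν + 1) t) t := by
  have ht2 : (0 : ℝ) < t / 2 := by linarith
  have ht2' : (t / 2 : ℝ) ≠ 0 := ne_of_gt ht2
  have h₁ : HasDerivAt (fun u : ℝ => (u / 2) ^ ν) (ν * (t / 2) ^ (ν - 1) * (1 / 2)) t := by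
    have ha := Real.hasDerivAt_rpow_const (x := t / 2) (p := ν) (Or.inl ht2')
    have hb := (hasDerivAt_id t).div_const 2
    simpa [Function.comp_def] using ha.comp t hb
  have h₂ : HasDerivAt (fun u : ℝ => Fb ν ((u / 2) ^ 2))
      (-Fb (ν + 1) ((t / 2) ^ 2) * ((2 : ℕ) * (t / 2) ^ 1 * (1 / 2))) t := by
    have hb := ((hasDerivAt_id t).div_const 2).pow 2
    have h := (Fb_hasDerivAt ν ((t / 2) ^ 2)).comp t hb
    exact h.congr_deriv rfl
  have hg := h₁.mul h₂
  have heq : besselJ ν =ᶠ[nhds t] fun u => (u / 2) ^ ν * Fb ν ((u / 2) ^ 2) := by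
    filter_upwards [Ioi_mem_nhds ht] with u hu
    exact besselJ_eq ν u hu
  have H := hg.congr_of_eventuallyEq heq
  have hV : ν / t * besselJ ν t - besselJ (ν + 1) t =
      ν * (t / 2) ^ (ν - 1) * (1 / 2) * Fb ν ((t / 2) ^ 2) +
        (t / 2) ^ ν * (-Fb (ν + 1) ((t / 2) ^ 2) * ((2 : ℕ) * (t / 2) ^ 1 * (1 / 2))) := by
    rw [besselJ_eq ν t ht, besselJ_eq (ν + 1) t ht, Real.rpow_sub_one ht2' ν,
      Real.rpow_add_one ht2' ν]
    have htne : (t : ℝ) ≠ 0 := ne_of_gt ht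
    field_simp
    ring
  rw [hV]
  exact H

lemma besselJ_rec (ν t : ℝ) (ht : 0 < t) :
    besselJ (ν - 1) t = 2 * ν / t * besselJ ν t - besselJ (ν + 1) t := by
  have ht2 : (0 : ℝ) < t / 2 := by linarith
  have ht2' : (t / 2 : ℝ) ≠ 0 := ne_of_gt ht2
  have htne : (t : ℝ) ≠ 0 := ne_of_gt ht
  rw [besselJ_eq (ν - 1) t ht, besselJ_eq ν t ht, besselJ_eq (ν + 1) t ht,
    Fb_rec ν ((t / 2) ^ 2), Real.rpow_sub_one ht2' ν, Real.rpow_add_one ht2' ν]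
  field_simp

/-- Diagonal value of the Bessel kernel:
`lim_{y→x} K_Bessel^{(a)}(x,y) = [(J_a(√x))² − J_{a+1}(√x) J_{a−1}(√x)]/4`. -/
theorem bessel_kernel_diagonal (a : ℝ) (x : ℝ) (hx : 0 < x) :
    Filter.Tendsto (fun y => besselKernel a x y) (nhdsWithin x {x}ᶜ)
      (nhds (((besselJ a (Real.sqrt x)) ^ 2 -
        besselJ (a + 1) (Real.sqrt x) * besselJ (a - 1) (Real.sqrt x)) / 4)) := by
  have hs : 0 < Real.sqrt x := Real.sqrt_pos.2 hx
  have hs' : Real.sqrt x ≠ 0 := ne_of_gt hs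
  set s : ℝ := Real.sqrt x with hsdef
  set A : ℝ := besselJ a s with hAdef
  set P : ℝ := besselJ (a + 1) s with hPdef
  have hJd : HasDerivAt (besselJ a) (a / s * A - P) s := besselJ_hasDerivAt a s hs
  have hB : deriv (besselJ a) s = a / s * A - P := hJd.deriv
  have hQ : besselJ (a - 1) s = 2 * a / s * A - P := besselJ_rec a s hs
  have hA2 : besselJ (a + 2) s = 2 * (a + 1) / s * P - A := by
    have h := besselJ_rec (a + 1) s hs
    rw [show a + 1 - 1 = a from by ring, show a + 1 + 1 = a + 2 from by ring] at h
    linarith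
  set D : ℝ → ℝ := deriv (besselJ a) with hDdef
  set dD : ℝ := a * -(s ^ 2)⁻¹ * A + a / s * (a / s * A - P) -
      ((a + 1) / s * P - besselJ (a + 2) s) with hdDdef
  have hDs : HasDerivAt D dD s := by
    have hinv : HasDerivAt (fun t : ℝ => a / t) (a * -(s ^ 2)⁻¹) s := by
      simpa [div_eq_mul_inv] using (hasDerivAt_inv hs').const_mul a
    have hval := (hinv.mul (besselJ_hasDerivAt a s hs)).sub (besselJ_hasDerivAt (a + 1) s hs)
    rw [show a + 1 + 1 = a + 2 from by ring] at hval
    apply hval.congr_of_eventuallyEq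
    filter_upwards [Ioi_mem_nhds hs] with t htpos
    exact (besselJ_hasDerivAt a t htpos).deriv
  have hsq : HasDerivAt Real.sqrt (1 / (2 * s)) x := Real.hasDerivAt_sqrt (ne_of_gt hx)
  have hDc : HasDerivAt (fun y => D (Real.sqrt y)) (dD * (1 / (2 * s))) x := by
    simpa [Function.comp_def] using hDs.comp x hsq
  have hJc : HasDerivAt (fun y => besselJ a (Real.sqrt y))
      ((a / s * A - P) * (1 / (2 * s))) x := by
    simpa [Function.comp_def] using hJd.comp x hsq
  set f : ℝ → ℝ := fun y => A * Real.sqrt y * D (Real.sqrt y) - D s * s * besselJ a (Real.sqrt y)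
    with hfdef
  set df : ℝ := A * (1 / (2 * s)) * D s + A * s * (dD * (1 / (2 * s))) -
      D s * s * ((a / s * A - P) * (1 / (2 * s))) with hdfdef
  have hf : HasDerivAt f df x := by
    have h1 : HasDerivAt (fun y : ℝ => A * Real.sqrt y) (A * (1 / (2 * s))) x :=
      hsq.const_mul A
    have h2 := (h1.mul hDc).sub (hJc.const_mul (D s * s))
    exact h2
  have hfx : f x = 0 := by
    simp only [hfdef, ← hsdef]
    ring
  have hslope := hasDerivAt_iff_tendsto_slope.mp hf
  have h2 : Filter.Tendsto (fun y => -(1 / 2 : ℝ) * slope f x y) (nhdsWithin x {x}ᶜ)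
      (nhds (-(1 / 2 : ℝ) * df)) := hslope.const_mul (-(1 / 2 : ℝ))
  have heq : ∀ y, -(1 / 2 : ℝ) * slope f x y = besselKernel a x y := by
    intro y
    rw [slope_def_field, hfx, sub_zero]
    unfold besselKernel
    rcases eq_or_ne y x with rfl | hy
    · simp
    · have hyx : y - x ≠ 0 := sub_ne_zero.2 hy
      have hxy : x - y ≠ 0 := sub_ne_zero.2 (Ne.symm hy)
      simp only [hfdef, ← hsdef, ← hAdef, ← hDdef]
      field_simp
      ring
  have hfinal : -(1 / 2 : ℝ) * df = (A ^ 2 - P * besselJ (a - 1) s) / 4 := by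
    rw [hdfdef, hdDdef, hB, hA2, hQ]
    field_simp
    ring
  rw [← hfinal]
  exact Filter.Tendsto.congr heq h2
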